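/- arXiv:1710.07625 — 2 statements merged into one kernel-verified Lean document; each statement's English description precedes it below -/
import Mathlib

section
/- Interpolation inequality W ≤ c A^{11/8} E^{1/8} + c A^{3/2}: for u with u(·,t) ∈ H²(B_r) for a.e. t ∈ (t₀-r⁴, t₀+r⁴), r^{-5} ∫_{Q_r} |u|³ ≤ c (ess sup_s r^{-1} ∫_{B_r} u(s)²)^{11/8} (r^{-1} ∫_{Q_r} uₓₓ²)^{1/8} + c (ess sup_s r^{-1} ∫_{B_r} u(s)²)^{3/2}. -/
open MeasureTheory

section SV12Helpers

open intervalIntegral Set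


lemma exists_le_avg {f : ℝ → ℝ} (hf : Continuous f) {a b : ℝ} (hab : a < b) :
    ∃ y ∈ Set.Icc a b, f y * (b - a) ≤ ∫ x in a..b, f x := by
  obtain ⟨y, hy, hmin⟩ := (isCompact_Icc (a := a) (b := b)).exists_isMinOn
    (Set.nonempty_Icc.mpr hab.le) hf.continuousOn
  refine ⟨y, hy, ?_⟩
  have h : ∫ x in a..b, f y ≤ ∫ x in a..b, f x :=
    intervalIntegral.integral_mono_on hab.le intervalIntegrable_const (hf.intervalIntegrable a b)
      (fun x hx => isMinOn_iff.mp hmin x hx)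
  simpa [mul_comm] using h

lemma pointwise_bound {v : ℝ → ℝ} (hv : ContDiff ℝ 2 v) {a b : ℝ} (hab : a < b) {x : ℝ}
    (hx : x ∈ Set.Icc a b) :
    |v x| ≤ 21 / (b - a) * (∫ s in a..b, |v s|) + (b - a) * ∫ s in a..b, |deriv (deriv v) s| := by
  have h1 : ContDiff ℝ 1 (deriv v) := by
    have := (contDiff_succ_iff_deriv (n := 1)).mp (by exact_mod_cast hv)
    exact this.2.2
  have hd1 : Differentiable ℝ v := hv.differentiable (by norm_num)
  have hd2 : Differentiable ℝ (deriv v) := h1.differentiable (by norm_num)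
  have hc0 : Continuous v := hv.continuous
  have hc2 : Continuous (deriv (deriv v)) := (contDiff_one_iff_deriv.mp h1).2
  obtain ⟨h, hh_def⟩ : ∃ h : ℝ, h = b - a := ⟨_, rfl⟩
  have hh : 0 < h := by rw [hh_def]; linarith
  rw [← hh_def]
  set I₀ : ℝ := ∫ s in a..b, |v s| with hI₀
  set I₂ : ℝ := ∫ s in a..b, |deriv (deriv v) s| with hI₂
  have hI₀0 : 0 ≤ I₀ := intervalIntegral.integral_nonneg hab.le (fun s _ => abs_nonneg _)
  have hI₂0 : 0 ≤ I₂ := intervalIntegral.integral_nonneg hab.le (fun s _ => abs_nonneg _)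
  have hmono : ∀ c d : ℝ, a ≤ c → d ≤ b → (∫ s in c..d, |v s|) ≤ I₀ := by
    intro c d hc hd
    by_cases hcd : c ≤ d
    · exact intervalIntegral.integral_mono_interval hc hcd hd
        (Filter.Eventually.of_forall fun s => abs_nonneg _) ((hc0.abs).intervalIntegrable a b)
    · rw [intervalIntegral.integral_of_ge (le_of_not_ge hcd)]
      have h0 : 0 ≤ ∫ s in Set.Ioc d c, |v s| :=
        setIntegral_nonneg measurableSet_Ioc (fun s _ => abs_nonneg _)
      linarith
  -- pick y in the left third
  obtain ⟨y, hy, hyavg⟩ := exists_le_avg (hc0.abs) (show a < a + h/3 by linarith)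
  have hyb : |v y| * h ≤ 3 * I₀ := by
    have h2 : |v y| * (h/3) ≤ I₀ := by
      have := hyavg.trans (hmono a (a + h/3) le_rfl (by linarith [hh_def]))
      simpa using this
    linarith
  -- pick z in the right third
  obtain ⟨z, hz, hzavg⟩ := exists_le_avg (hc0.abs) (show b - h/3 < b by linarith)
  have hzb : |v z| * h ≤ 3 * I₀ := by
    have h2 : |v z| * (h/3) ≤ I₀ := by
      have := hzavg.trans (hmono (b - h/3) b (by linarith [hh_def]) le_rfl)
      simpa using this
    linarith
  have hy1 : a ≤ y := hy.1
  have hy2 : y ≤ a + h/3 := hy.2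
  have hz1 : b - h/3 ≤ z := hz.1
  have hz2 : z ≤ b := hz.2
  have hyz : y < z := by linarith [hh_def]
  have hzy3 : h/3 ≤ z - y := by linarith [hh_def]
  obtain ⟨ξ, hξ, hξeq⟩ := exists_deriv_eq_slope v hyz hc0.continuousOn hd1.differentiableOn
  have hξa : a ≤ ξ := le_trans hy1 hξ.1.le
  have hξb : ξ ≤ b := le_trans hξ.2.le hz2
  have hξbound : |deriv v ξ| ≤ 18 / h^2 * I₀ := by
    have hzy : (0:ℝ) < z - y := by linarith
    rw [hξeq, abs_div, abs_of_pos hzy, div_le_iff₀ hzy]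
    have habs : |v z - v y| ≤ |v z| + |v y| := abs_sub _ _
    have h6 : |v z| + |v y| ≤ 6 / h * I₀ := by
      rw [div_mul_eq_mul_div, le_div_iff₀ hh]
      nlinarith
    have h5 : 6 / h * I₀ ≤ 18 / h ^ 2 * I₀ * (z - y) :=
      calc 6 / h * I₀ = 18 / h^2 * I₀ * (h/3) := by field_simp; ring
        _ ≤ 18 / h^2 * I₀ * (z - y) := mul_le_mul_of_nonneg_left hzy3 (by positivity)
    linarith
  have hK : ∀ s ∈ Set.Icc a b, |deriv v s| ≤ 18 / h^2 * I₀ + I₂ := by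
    intro s hs
    have hftc : (∫ t in ξ..s, deriv (deriv v) t) = deriv v s - deriv v ξ :=
      intervalIntegral.integral_deriv_eq_sub (fun t _ => hd2 t) ((hc2.intervalIntegrable ξ s))
    have habs2 : |∫ t in ξ..s, deriv (deriv v) t| ≤ I₂ := by
      rcases le_total ξ s with hc | hc
      · calc |∫ t in ξ..s, deriv (deriv v) t| ≤ ∫ t in ξ..s, |deriv (deriv v) t| :=
              intervalIntegral.abs_integral_le_integral_abs hc
          _ ≤ I₂ := intervalIntegral.integral_mono_interval hξa hc hs.2
              (Filter.Eventually.of_forall fun s => abs_nonneg _) ((hc2.abs).intervalIntegrable a b)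
      · rw [intervalIntegral.integral_symm, abs_neg]
        calc |∫ t in s..ξ, deriv (deriv v) t| ≤ ∫ t in s..ξ, |deriv (deriv v) t| :=
              intervalIntegral.abs_integral_le_integral_abs hc
          _ ≤ I₂ := intervalIntegral.integral_mono_interval hs.1 hc hξb
              (Filter.Eventually.of_forall fun s => abs_nonneg _) ((hc2.abs).intervalIntegrable a b)
    have h7 : |deriv v s| - |deriv v ξ| ≤ |deriv v s - deriv v ξ| := abs_sub_abs_le_abs_sub _ _
    rw [← hftc] at h7
    linarith
  have hftc0 : (∫ t in y..x, deriv v t) = v x - v y :=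
    intervalIntegral.integral_deriv_eq_sub (fun t _ => hd1 t)
      (((h1.continuous).intervalIntegrable y x))
  have hbnd : ‖∫ t in y..x, deriv v t‖ ≤ (18 / h^2 * I₀ + I₂) * |x - y| := by
    apply intervalIntegral.norm_integral_le_of_norm_le_const
    intro t ht
    rw [Real.norm_eq_abs]
    rcases Set.mem_uIoc.mp ht with h' | h'
    · exact hK t ⟨le_trans hy1 h'.1.le, le_trans h'.2 hx.2⟩
    · exact hK t ⟨le_trans hx.1 h'.1.le, le_trans h'.2 (by linarith [hh_def] : y ≤ b)⟩
  rw [Real.norm_eq_abs] at hbnd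
  have hxy : |x - y| ≤ h := by
    rw [abs_le]
    constructor <;> [linarith [hx.1, hh_def]; linarith [hx.2, hh_def]]
  have hKnn : (0:ℝ) ≤ 18 / h^2 * I₀ + I₂ := by positivity
  have hmain : |v x| ≤ |v y| + (18 / h^2 * I₀ + I₂) * h := by
    have t1 : |v x| - |v y| ≤ |v x - v y| := abs_sub_abs_le_abs_sub _ _
    rw [← hftc0] at t1
    have t2 := hbnd.trans (mul_le_mul_of_nonneg_left hxy hKnn)
    linarith
  have hyb' : |v y| ≤ 3 / h * I₀ := by rw [div_mul_eq_mul_div, le_div_iff₀ hh]; linarith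
  calc |v x| ≤ |v y| + (18 / h^2 * I₀ + I₂) * h := hmain
    _ ≤ 3/h*I₀ + (18 / h^2 * I₀ + I₂) * h := by linarith
    _ = 21 / h * I₀ + h * I₂ := by field_simp; ring



lemma holder_p {f : ℝ → ℝ} (hf : Continuous f) (h0 : ∀ x, 0 ≤ f x) {p : ℝ} (hp : 1 < p)
    {a b : ℝ} (hab : a ≤ b) :
    ∫ x in Set.Ioc a b, f x ≤ (b - a) ^ (1 - 1/p) * (∫ x in Set.Ioc a b, f x ^ p) ^ (1/p) := by
  have hp0 : 0 < p := lt_trans one_pos hp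
  set μ : Measure ℝ := volume.restrict (Set.Ioc a b) with hμ
  haveI : IsFiniteMeasure μ := by
    constructor
    rw [hμ, Measure.restrict_apply_univ, Real.volume_Ioc]
    exact ENNReal.ofReal_lt_top
  have hq : Real.HolderConjugate p (p/(p-1)) := Real.HolderConjugate.conjExponent hp
  -- bound for Memℒp
  obtain ⟨C, hC⟩ := (isCompact_Icc (a := a) (b := b)).exists_bound_of_continuousOn hf.continuousOn
  have hmem : MemLp f (ENNReal.ofReal p) μ := by
    apply MemLp.of_bound hf.aestronglyMeasurable C
    rw [hμ, ae_restrict_iff' measurableSet_Ioc]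
    exact Filter.Eventually.of_forall fun x hx => hC x (Set.Ioc_subset_Icc_self hx)
  have hmem1 : MemLp (fun _ : ℝ => (1:ℝ)) (ENNReal.ofReal (p/(p-1))) μ := memLp_const 1
  have key := integral_mul_le_Lp_mul_Lq_of_nonneg (μ := μ) hq
    (Filter.Eventually.of_forall h0) (Filter.Eventually.of_forall fun _ => zero_le_one)
    hmem hmem1
  simp only [mul_one] at key
  have h1 : (∫ x, (1:ℝ) ^ (p/(p-1)) ∂μ) = b - a := by
    simp only [Real.one_rpow]
    rw [hμ, MeasureTheory.integral_const, measureReal_def, Measure.restrict_apply_univ, Real.volume_Ioc, smul_eq_mul, mul_one,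
      ENNReal.toReal_ofReal (by linarith)]
  rw [h1] at key
  have h2 : (1 : ℝ) / (p/(p-1)) = 1 - 1/p := by field_simp
  rw [h2] at key
  calc ∫ x in Set.Ioc a b, f x ≤ (∫ x in Set.Ioc a b, f x ^ p) ^ (1/p) * (b - a) ^ (1 - 1/p) := key
    _ = (b - a) ^ (1 - 1/p) * (∫ x in Set.Ioc a b, f x ^ p) ^ (1/p) := mul_comm _ _


-- Cauchy–Schwarz on an interval
lemma cs_interval {f : ℝ → ℝ} (hf : Continuous f) {a b : ℝ} (hab : a ≤ b) :
    (∫ s in a..b, |f s|) ≤ (b - a) ^ ((1:ℝ)/2) * (∫ s in a..b, (f s)^2) ^ ((1:ℝ)/2) := by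
  have h := holder_p (f := fun s => |f s|) hf.abs (fun x => abs_nonneg _) (p := 2) one_lt_two hab
  have hcongr : (∫ x in Set.Ioc a b, |f x| ^ (2:ℝ)) = ∫ x in Set.Ioc a b, (f x)^2 := by
    apply MeasureTheory.integral_congr_ae
    apply Filter.Eventually.of_forall
    intro x
    show |f x| ^ (2:ℝ) = f x ^ 2
    rw [show ((2:ℝ) = ((2:ℕ):ℝ)) by norm_num, Real.rpow_natCast, sq_abs]
  rw [hcongr] at h
  rw [intervalIntegral.integral_of_le hab, intervalIntegral.integral_of_le hab]
  norm_num at h ⊢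
  exact h

lemma sup_bound {v : ℝ → ℝ} (hv : ContDiff ℝ 2 v) {a b h : ℝ} (hab : a < b)
    (hh : 0 < h) (hhL : h ≤ b - a) {x : ℝ} (hx : x ∈ Set.Icc a b) :
    |v x| ≤ 21 * h ^ (-(1:ℝ)/2) * (∫ s in a..b, (v s)^2) ^ ((1:ℝ)/2)
          + h ^ ((3:ℝ)/2) * (∫ s in a..b, (deriv (deriv v) s)^2) ^ ((1:ℝ)/2) := by
  have h1 : ContDiff ℝ 1 (deriv v) := by
    have := (contDiff_succ_iff_deriv (n := 1)).mp (by exact_mod_cast hv)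
    exact this.2.2
  have hc0 : Continuous v := hv.continuous
  have hc2 : Continuous (deriv (deriv v)) := (contDiff_one_iff_deriv.mp h1).2
  -- the subinterval [α, α+h]
  set α : ℝ := min x (b - h) with hα
  have hαa : a ≤ α := le_min hx.1 (by linarith)
  have hαb : α + h ≤ b := by
    have : α ≤ b - h := min_le_right _ _
    linarith
  have hxα : x ∈ Set.Icc α (α + h) := by
    constructor
    · exact min_le_left _ _
    · rcases le_total x (b - h) with hc | hc
      · rw [hα, min_eq_left hc]; linarith
      · rw [hα, min_eq_right hc]; linarith [hx.2]
  have hαlt : α < α + h := by linarith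
  have hP := pointwise_bound hv hαlt hxα
  rw [show α + h - α = h by ring] at hP
  -- Cauchy–Schwarz on the subinterval
  have hcs0 : (∫ s in α..(α+h), |v s|) ≤ h ^ ((1:ℝ)/2) * (∫ s in α..(α+h), (v s)^2) ^ ((1:ℝ)/2) := by
    have := cs_interval hc0 hαlt.le
    rwa [show α + h - α = h by ring] at this
  have hcs2 : (∫ s in α..(α+h), |deriv (deriv v) s|)
      ≤ h ^ ((1:ℝ)/2) * (∫ s in α..(α+h), (deriv (deriv v) s)^2) ^ ((1:ℝ)/2) := by
    have := cs_interval hc2 hαlt.le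
    rwa [show α + h - α = h by ring] at this
  -- monotonicity of the squared integrals
  have hm0 : (∫ s in α..(α+h), (v s)^2) ≤ ∫ s in a..b, (v s)^2 :=
    intervalIntegral.integral_mono_interval hαa hαlt.le hαb
      (Filter.Eventually.of_forall fun s => sq_nonneg _) (((hc0.pow 2)).intervalIntegrable a b)
  have hm2 : (∫ s in α..(α+h), (deriv (deriv v) s)^2) ≤ ∫ s in a..b, (deriv (deriv v) s)^2 :=
    intervalIntegral.integral_mono_interval hαa hαlt.le hαb
      (Filter.Eventually.of_forall fun s => sq_nonneg _) (((hc2.pow 2)).intervalIntegrable a b)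
  have hi0nn : (0:ℝ) ≤ ∫ s in α..(α+h), (v s)^2 :=
    intervalIntegral.integral_nonneg hαlt.le fun s _ => sq_nonneg _
  have hi2nn : (0:ℝ) ≤ ∫ s in α..(α+h), (deriv (deriv v) s)^2 :=
    intervalIntegral.integral_nonneg hαlt.le fun s _ => sq_nonneg _
  have hr0 : (∫ s in α..(α+h), (v s)^2) ^ ((1:ℝ)/2) ≤ (∫ s in a..b, (v s)^2) ^ ((1:ℝ)/2) :=
    Real.rpow_le_rpow hi0nn hm0 (by norm_num)
  have hr2 : (∫ s in α..(α+h), (deriv (deriv v) s)^2) ^ ((1:ℝ)/2)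
      ≤ (∫ s in a..b, (deriv (deriv v) s)^2) ^ ((1:ℝ)/2) :=
    Real.rpow_le_rpow hi2nn hm2 (by norm_num)
  -- assemble
  have e1 : 21 / h * (h ^ ((1:ℝ)/2) * (∫ s in a..b, (v s)^2) ^ ((1:ℝ)/2))
      = 21 * h ^ (-(1:ℝ)/2) * (∫ s in a..b, (v s)^2) ^ ((1:ℝ)/2) := by
    rw [show (-(1:ℝ)/2) = (1:ℝ)/2 + (-1) by norm_num, Real.rpow_add hh, Real.rpow_neg_one]
    field_simp
  have e2 : h * (h ^ ((1:ℝ)/2) * (∫ s in a..b, (deriv (deriv v) s)^2) ^ ((1:ℝ)/2))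
      = h ^ ((3:ℝ)/2) * (∫ s in a..b, (deriv (deriv v) s)^2) ^ ((1:ℝ)/2) := by
    rw [show ((3:ℝ)/2) = 1 + (1:ℝ)/2 by norm_num, Real.rpow_add hh, Real.rpow_one]
    ring
  have hs0nn : (0:ℝ) ≤ (∫ s in a..b, (v s)^2) ^ ((1:ℝ)/2) :=
    Real.rpow_nonneg (intervalIntegral.integral_nonneg hab.le fun s _ => sq_nonneg _) _
  have hs2nn : (0:ℝ) ≤ (∫ s in a..b, (deriv (deriv v) s)^2) ^ ((1:ℝ)/2) :=
    Real.rpow_nonneg (intervalIntegral.integral_nonneg hab.le fun s _ => sq_nonneg _) _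
  calc |v x| ≤ 21 / h * (∫ s in α..(α+h), |v s|) + h * ∫ s in α..(α+h), |deriv (deriv v) s| := hP
    _ ≤ 21 / h * (h ^ ((1:ℝ)/2) * (∫ s in a..b, (v s)^2) ^ ((1:ℝ)/2))
        + h * (h ^ ((1:ℝ)/2) * (∫ s in a..b, (deriv (deriv v) s)^2) ^ ((1:ℝ)/2)) := by
        have b1 : (∫ s in α..(α+h), |v s|) ≤ h ^ ((1:ℝ)/2) * (∫ s in a..b, (v s)^2) ^ ((1:ℝ)/2) :=
          hcs0.trans (mul_le_mul_of_nonneg_left hr0 (Real.rpow_nonneg hh.le _))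
        have b2 : (∫ s in α..(α+h), |deriv (deriv v) s|)
            ≤ h ^ ((1:ℝ)/2) * (∫ s in a..b, (deriv (deriv v) s)^2) ^ ((1:ℝ)/2) :=
          hcs2.trans (mul_le_mul_of_nonneg_left hr2 (Real.rpow_nonneg hh.le _))
        have hhi : (0:ℝ) ≤ 21 / h := by positivity
        exact add_le_add (mul_le_mul_of_nonneg_left b1 hhi) (mul_le_mul_of_nonneg_left b2 hh.le)
    _ = _ := by rw [e1, e2]


lemma sup_interp {v : ℝ → ℝ} (hv : ContDiff ℝ 2 v) {a b : ℝ} (hab : a < b) {x : ℝ}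
    (hx : x ∈ Set.Icc a b) :
    |v x| ≤ 22 * ((∫ s in a..b, (v s)^2) ^ ((3:ℝ)/8) * (∫ s in a..b, (deriv (deriv v) s)^2) ^ ((1:ℝ)/8))
          + 22 * ((b - a) ^ (-(1:ℝ)/2) * (∫ s in a..b, (v s)^2) ^ ((1:ℝ)/2)) := by
  set N2 : ℝ := ∫ s in a..b, (v s)^2 with hN2def
  set D2 : ℝ := ∫ s in a..b, (deriv (deriv v) s)^2 with hD2def
  have hN2nn : 0 ≤ N2 := intervalIntegral.integral_nonneg hab.le fun s _ => sq_nonneg _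
  have hD2nn : 0 ≤ D2 := intervalIntegral.integral_nonneg hab.le fun s _ => sq_nonneg _
  have hL : (0:ℝ) < b - a := sub_pos.mpr hab
  rcases eq_or_lt_of_le hN2nn with hN2 | hN2
  · -- N2 = 0 : v vanishes
    have hRHS : 22 * (N2 ^ ((3:ℝ)/8) * D2 ^ ((1:ℝ)/8))
        + 22 * ((b - a) ^ (-(1:ℝ)/2) * N2 ^ ((1:ℝ)/2)) = 0 := by
      rw [← hN2, Real.zero_rpow (by norm_num), Real.zero_rpow (by norm_num)]
      ring
    rw [hRHS]
    by_contra hpos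
    push_neg at hpos
    have hvx : 0 < |v x| := hpos
    set D : ℝ := D2 ^ ((1:ℝ)/2) with hDdef
    have hD0 : 0 ≤ D := Real.rpow_nonneg hD2nn _
    set t : ℝ := |v x| / (2 * (D + 1)) with htdef
    have ht : 0 < t := by positivity
    set h : ℝ := min (b - a) (t ^ ((2:ℝ)/3)) with hhdef
    have hh : 0 < h := lt_min hL (Real.rpow_pos_of_pos ht _)
    have hsb := sup_bound hv hab hh (min_le_left _ _) hx
    rw [← hN2def, ← hD2def, ← hN2, Real.zero_rpow (by norm_num), mul_zero, zero_add, ← hDdef] at hsb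
    have hh32 : h ^ ((3:ℝ)/2) ≤ t := by
      calc h ^ ((3:ℝ)/2) ≤ (t ^ ((2:ℝ)/3)) ^ ((3:ℝ)/2) :=
            Real.rpow_le_rpow hh.le (min_le_right _ _) (by norm_num)
        _ = t ^ ((2:ℝ)/3 * ((3:ℝ)/2)) := (Real.rpow_mul ht.le _ _).symm
        _ = t := by norm_num
    have hstep : h ^ ((3:ℝ)/2) * D ≤ t * D := mul_le_mul_of_nonneg_right hh32 hD0
    have htD : t * D ≤ |v x| / 2 := by
      rw [htdef, div_mul_eq_mul_div, div_le_div_iff₀ (by positivity) (by norm_num)]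
      nlinarith [hvx.le]
    linarith
  · -- N2 > 0
    rcases eq_or_lt_of_le hD2nn with hD2 | hD2
    · -- D2 = 0
      have hsb := sup_bound hv hab hL le_rfl hx
      rw [← hN2def, ← hD2def, ← hD2, Real.zero_rpow (by norm_num), mul_zero, add_zero] at hsb
      have h1 : (0:ℝ) ≤ N2 ^ ((3:ℝ)/8) * D2 ^ ((1:ℝ)/8) := by positivity
      have h2 : (0:ℝ) ≤ (b - a) ^ (-(1:ℝ)/2) * N2 ^ ((1:ℝ)/2) := by positivity
      nlinarith [hsb]
    · -- D2 > 0 : main interpolation case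
      have hQ : (0:ℝ) < N2 / D2 := by positivity
      set h : ℝ := min (b - a) ((N2/D2) ^ ((1:ℝ)/4)) with hhdef
      have hh : 0 < h := lt_min hL (Real.rpow_pos_of_pos hQ _)
      have hsb := sup_bound hv hab hh (min_le_left _ _) hx
      rw [← hN2def, ← hD2def] at hsb
      have hexpQ : ∀ e : ℝ, (N2/D2) ^ e = Real.exp ((Real.log N2 - Real.log D2) * e) := by
        intro e
        rw [Real.rpow_def_of_pos hQ, Real.log_div hN2.ne' hD2.ne']
      have hexpN : ∀ e : ℝ, N2 ^ e = Real.exp (Real.log N2 * e) := fun e =>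
        Real.rpow_def_of_pos hN2 e
      have hexpD : ∀ e : ℝ, D2 ^ e = Real.exp (Real.log D2 * e) := fun e =>
        Real.rpow_def_of_pos hD2 e
      have hnest : ∀ e : ℝ, ((N2/D2) ^ ((1:ℝ)/4)) ^ e
          = Real.exp ((Real.log N2 - Real.log D2) * (1/4) * e) := by
        intro e
        rw [hexpQ, Real.rpow_def_of_pos (Real.exp_pos _), Real.log_exp]
      rcases le_total ((N2/D2) ^ ((1:ℝ)/4)) (b - a) with hle | hlt
      · -- h = (N2/D2)^{1/4}
        have hhe : h = (N2/D2) ^ ((1:ℝ)/4) := min_eq_right hle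
        rw [hhe] at hsb
        have id1 : ((N2/D2) ^ ((1:ℝ)/4)) ^ (-(1:ℝ)/2) * N2 ^ ((1:ℝ)/2)
            = N2 ^ ((3:ℝ)/8) * D2 ^ ((1:ℝ)/8) := by
          rw [hnest, hexpN ((1:ℝ)/2), hexpN ((3:ℝ)/8), hexpD ((1:ℝ)/8),
            ← Real.exp_add, ← Real.exp_add, Real.exp_eq_exp]
          ring
        have id2 : ((N2/D2) ^ ((1:ℝ)/4)) ^ ((3:ℝ)/2) * D2 ^ ((1:ℝ)/2)
            = N2 ^ ((3:ℝ)/8) * D2 ^ ((1:ℝ)/8) := by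
          rw [hnest, hexpD ((1:ℝ)/2), hexpN ((3:ℝ)/8), hexpD ((1:ℝ)/8),
            ← Real.exp_add, ← Real.exp_add, Real.exp_eq_exp]
          ring
        have h2 : (0:ℝ) ≤ (b - a) ^ (-(1:ℝ)/2) * N2 ^ ((1:ℝ)/2) := by positivity
        nlinarith [hsb, id1, id2]
      · -- h = b - a, and (b-a)^4 D2 ≤ N2
        have hhe : h = b - a := min_eq_left hlt
        rw [hhe] at hsb
        have h4 : (b - a) ^ (4:ℝ) ≤ N2 / D2 := by
          calc (b - a) ^ (4:ℝ) ≤ ((N2/D2) ^ ((1:ℝ)/4)) ^ (4:ℝ) :=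
                Real.rpow_le_rpow hL.le hlt (by norm_num)
            _ = (N2/D2) ^ ((1:ℝ)/4 * 4) := (Real.rpow_mul hQ.le _ _).symm
            _ = N2 / D2 := by norm_num
        have h5 : (b - a) ^ ((3:ℝ)/2) * D2 ^ ((1:ℝ)/2) ≤ (b - a) ^ (-(1:ℝ)/2) * N2 ^ ((1:ℝ)/2) := by
          have hbase : (b - a) ^ (4:ℝ) * D2 ≤ N2 := by
            rw [← le_div_iff₀ hD2]; exact h4
          have hmono : ((b - a) ^ (4:ℝ) * D2) ^ ((1:ℝ)/2) ≤ N2 ^ ((1:ℝ)/2) :=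
            Real.rpow_le_rpow (by positivity) hbase (by norm_num)
          have hsplit : ((b - a) ^ (4:ℝ) * D2) ^ ((1:ℝ)/2)
              = (b - a) ^ (2:ℝ) * D2 ^ ((1:ℝ)/2) := by
            rw [Real.mul_rpow (by positivity) hD2nn, ← Real.rpow_mul hL.le]
            norm_num
          rw [hsplit] at hmono
          have e3 : (b - a) ^ ((3:ℝ)/2) * D2 ^ ((1:ℝ)/2)
              = (b - a) ^ (-(1:ℝ)/2) * ((b - a) ^ (2:ℝ) * D2 ^ ((1:ℝ)/2)) := by
            rw [← mul_assoc, ← Real.rpow_add hL]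
            norm_num
          rw [e3]
          exact mul_le_mul_of_nonneg_left hmono (Real.rpow_nonneg hL.le _)
        have h1 : (0:ℝ) ≤ N2 ^ ((3:ℝ)/8) * D2 ^ ((1:ℝ)/8) := by positivity
        have h6 : (0:ℝ) ≤ (b - a) ^ (-(1:ℝ)/2) * N2 ^ ((1:ℝ)/2) := by positivity
        nlinarith [hsb, h5]


lemma space_lemma {v : ℝ → ℝ} (hv : ContDiff ℝ 2 v) {a b : ℝ} (hab : a < b) :
    (∫ s in a..b, |v s|^3)
      ≤ 22 * (∫ s in a..b, (v s)^2) ^ ((11:ℝ)/8) * (∫ s in a..b, (deriv (deriv v) s)^2) ^ ((1:ℝ)/8)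
      + 22 * (b - a) ^ (-(1:ℝ)/2) * (∫ s in a..b, (v s)^2) ^ ((3:ℝ)/2) := by
  have h1 : ContDiff ℝ 1 (deriv v) := by
    have := (contDiff_succ_iff_deriv (n := 1)).mp (by exact_mod_cast hv)
    exact this.2.2
  have hc0 : Continuous v := hv.continuous
  have hc2 : Continuous (deriv (deriv v)) := (contDiff_one_iff_deriv.mp h1).2
  set N2 : ℝ := ∫ s in a..b, (v s)^2 with hN2def
  set D2 : ℝ := ∫ s in a..b, (deriv (deriv v) s)^2 with hD2def
  have hN2nn : 0 ≤ N2 := intervalIntegral.integral_nonneg hab.le fun s _ => sq_nonneg _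
  set M : ℝ := 22 * (N2 ^ ((3:ℝ)/8) * D2 ^ ((1:ℝ)/8))
      + 22 * ((b - a) ^ (-(1:ℝ)/2) * N2 ^ ((1:ℝ)/2)) with hMdef
  have hstep : (∫ s in a..b, |v s|^3) ≤ ∫ s in a..b, M * (v s)^2 := by
    apply intervalIntegral.integral_mono_on hab.le
      ((hc0.abs.pow 3).intervalIntegrable a b)
      (((continuous_const.mul (hc0.pow 2))).intervalIntegrable a b)
    intro s hs
    have hb := sup_interp hv hab hs
    calc |v s|^3 = |v s| * (v s)^2 := by rw [pow_succ, sq_abs, mul_comm]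
      _ ≤ M * (v s)^2 := mul_le_mul_of_nonneg_right hb (sq_nonneg _)
  rw [intervalIntegral.integral_const_mul] at hstep
  have hfin : M * N2 = 22 * N2 ^ ((11:ℝ)/8) * D2 ^ ((1:ℝ)/8)
      + 22 * (b - a) ^ (-(1:ℝ)/2) * N2 ^ ((3:ℝ)/2) := by
    have e1 : N2 ^ ((3:ℝ)/8) * N2 = N2 ^ ((11:ℝ)/8) := by
      rw [show ((11:ℝ)/8) = (3:ℝ)/8 + 1 by norm_num, Real.rpow_add' hN2nn (by norm_num),
        Real.rpow_one]
    have e2 : N2 ^ ((1:ℝ)/2) * N2 = N2 ^ ((3:ℝ)/2) := by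
      rw [show ((3:ℝ)/2) = (1:ℝ)/2 + 1 by norm_num, Real.rpow_add' hN2nn (by norm_num),
        Real.rpow_one]
    rw [hMdef]
    linear_combination (22 * D2 ^ ((1:ℝ)/8)) * e1 + (22 * (b - a) ^ (-(1:ℝ)/2)) * e2
  rw [hfin] at hstep
  exact hstep



lemma term2_alg {r A : ℝ} (hr : 0 < r) (hA : 0 ≤ A) :
    (2*r^4) * (22 * (2*r) ^ (-(1:ℝ)/2) * (r*A) ^ ((3:ℝ)/2)) ≤ r^5 * (64 * A ^ ((3:ℝ)/2)) := by
  have e1 : (2*r) ^ (-(1:ℝ)/2) = (2:ℝ) ^ (-(1:ℝ)/2) * r ^ (-(1:ℝ)/2) :=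
    Real.mul_rpow (by norm_num) hr.le
  have e2 : (r*A) ^ ((3:ℝ)/2) = r ^ ((3:ℝ)/2) * A ^ ((3:ℝ)/2) := Real.mul_rpow hr.le hA
  have e3 : r ^ (-(1:ℝ)/2) * r ^ ((3:ℝ)/2) = r := by
    rw [← Real.rpow_add hr]; norm_num
  have e5 : (2:ℝ) ^ (-(1:ℝ)/2) ≤ 1 := Real.rpow_le_one_of_one_le_of_nonpos (by norm_num) (by norm_num)
  have e6 : (0:ℝ) ≤ A ^ ((3:ℝ)/2) := Real.rpow_nonneg hA _
  rw [e1, e2]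
  have key : (2*r^4) * (22 * ((2:ℝ) ^ (-(1:ℝ)/2) * r ^ (-(1:ℝ)/2)) * (r ^ ((3:ℝ)/2) * A ^ ((3:ℝ)/2)))
      = 44 * (2:ℝ) ^ (-(1:ℝ)/2) * (r^5 * A ^ ((3:ℝ)/2)) := by
    linear_combination (44 * (2:ℝ) ^ (-(1:ℝ)/2) * r^4 * A ^ ((3:ℝ)/2)) * e3
  rw [key]
  have hc : (0:ℝ) ≤ 64 - 44 * (2:ℝ) ^ (-(1:ℝ)/2) := by linarith
  have hX : (0:ℝ) ≤ r^5 * A ^ ((3:ℝ)/2) := by positivity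
  have := mul_nonneg hc hX
  linarith

lemma term1_alg {r A IG : ℝ} (hr : 0 < r) (hA : 0 ≤ A) (hIG : 0 ≤ IG) :
    22 * (r*A) ^ ((11:ℝ)/8) * ((2*r^4) ^ ((7:ℝ)/8) * IG ^ ((1:ℝ)/8))
      ≤ r^5 * (64 * (A ^ ((11:ℝ)/8) * ((1/r)*IG) ^ ((1:ℝ)/8))) := by
  have e1 : (r*A) ^ ((11:ℝ)/8) = r ^ ((11:ℝ)/8) * A ^ ((11:ℝ)/8) := Real.mul_rpow hr.le hA
  have e2 : (2*r^4) ^ ((7:ℝ)/8) = (2:ℝ) ^ ((7:ℝ)/8) * (r^4) ^ ((7:ℝ)/8) :=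
    Real.mul_rpow (by norm_num) (by positivity)
  have e3 : ((r^4 : ℝ)) ^ ((7:ℝ)/8) = r ^ ((7:ℝ)/2) := by
    rw [← Real.rpow_natCast r 4, ← Real.rpow_mul hr.le]; norm_num
  have e4 : ((1/r)*IG) ^ ((1:ℝ)/8) = r ^ (-(1:ℝ)/8) * IG ^ ((1:ℝ)/8) := by
    rw [Real.mul_rpow (by positivity) hIG, one_div, Real.inv_rpow hr.le, ← Real.rpow_neg hr.le]
    norm_num
  have e5 : r ^ ((11:ℝ)/8) * r ^ ((7:ℝ)/2) = r^5 * r ^ (-(1:ℝ)/8) := by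
    rw [← Real.rpow_add hr, ← Real.rpow_natCast r 5, ← Real.rpow_add hr]; norm_num
  have e7 : (2:ℝ) ^ ((7:ℝ)/8) ≤ 2 := by
    calc (2:ℝ) ^ ((7:ℝ)/8) ≤ (2:ℝ) ^ (1:ℝ) :=
          Real.rpow_le_rpow_of_exponent_le (by norm_num) (by norm_num)
      _ = 2 := Real.rpow_one 2
  rw [e1, e2, e3, e4]
  have key : 22 * (r ^ ((11:ℝ)/8) * A ^ ((11:ℝ)/8)) * ((2:ℝ) ^ ((7:ℝ)/8) * r ^ ((7:ℝ)/2) * IG ^ ((1:ℝ)/8))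
      = 22 * (2:ℝ) ^ ((7:ℝ)/8) * (r^5 * r ^ (-(1:ℝ)/8) * A ^ ((11:ℝ)/8) * IG ^ ((1:ℝ)/8)) := by
    linear_combination (22 * (2:ℝ) ^ ((7:ℝ)/8) * A ^ ((11:ℝ)/8) * IG ^ ((1:ℝ)/8)) * e5
  rw [key]
  have hc : (0:ℝ) ≤ 64 - 22 * (2:ℝ) ^ ((7:ℝ)/8) := by linarith
  have hX : (0:ℝ) ≤ r^5 * r ^ (-(1:ℝ)/8) * A ^ ((11:ℝ)/8) * IG ^ ((1:ℝ)/8) := by positivity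
  have := mul_nonneg hc hX
  linarith


end SV12Helpers

/-- Interpolation inequality `W ≤ c A^{11/8} E^{1/8} + c A^{3/2}`, where
`A = ess sup_s r^{-1} ∫_{B_r} u(s)²`, `E = r^{-1} ∫_{Q_r} uₓₓ²`,
`W = r^{-5} ∫_{Q_r} |u|³`, on the cylinder `Q_r = B_r(x₀) × (t₀-r⁴, t₀+r⁴)`. -/
theorem stmt12 :
    ∃ c : ℝ, 0 < c ∧ ∀ (r x₀ t₀ A : ℝ) (u : ℝ → ℝ → ℝ),
      0 < r →
      (∀ t, ContDiff ℝ 2 (u t)) →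
      Continuous (fun p : ℝ × ℝ => u p.1 p.2) →
      Continuous (fun p : ℝ × ℝ => deriv (deriv (u p.1)) p.2) →
      0 ≤ A →
      (∀ᵐ s ∂(volume.restrict (Set.Ioo (t₀ - r ^ 4) (t₀ + r ^ 4))),
        (1 / r) * (∫ x in Set.Ioo (x₀ - r) (x₀ + r), (u s x) ^ 2) ≤ A) →
      (1 / r ^ 5) * (∫ t in Set.Ioo (t₀ - r ^ 4) (t₀ + r ^ 4),
          ∫ x in Set.Ioo (x₀ - r) (x₀ + r), |u t x| ^ 3)
        ≤ c * A ^ ((11:ℝ)/8) *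
            ((1 / r) * ∫ t in Set.Ioo (t₀ - r ^ 4) (t₀ + r ^ 4),
              ∫ x in Set.Ioo (x₀ - r) (x₀ + r), (deriv (deriv (u t)) x) ^ 2) ^ ((1:ℝ)/8)
          + c * A ^ ((3:ℝ)/2) := by
  refine ⟨64, by norm_num, ?_⟩
  intro r x₀ t₀ A u hr hu hcont hcont2 hA hae
  have hab : x₀ - r < x₀ + r := by linarith
  have hr4 : (0:ℝ) < r^4 := by positivity
  have htab : t₀ - r^4 < t₀ + r^4 := by linarith
  have conv : ∀ f : ℝ → ℝ,
      (∫ x in Set.Ioo (x₀ - r) (x₀ + r), f x) = ∫ x in (x₀ - r)..(x₀ + r), f x := by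
    intro f
    rw [intervalIntegral.integral_of_le hab.le, MeasureTheory.integral_Ioc_eq_integral_Ioo]
  simp only [conv]
  -- continuity of the parametric integrals
  have hScont : Continuous (fun t => ∫ x in (x₀ - r)..(x₀ + r), (u t x)^2) := by
    apply intervalIntegral.continuous_parametric_intervalIntegral_of_continuous'
    exact hcont.pow 2
  have hGcont : Continuous (fun t => ∫ x in (x₀ - r)..(x₀ + r), (deriv (deriv (u t)) x)^2) := by
    apply intervalIntegral.continuous_parametric_intervalIntegral_of_continuous'
    exact hcont2.pow 2
  have hFcont : Continuous (fun t => ∫ x in (x₀ - r)..(x₀ + r), |u t x|^3) := by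
    apply intervalIntegral.continuous_parametric_intervalIntegral_of_continuous'
    exact hcont.abs.pow 3
  have hS0 : ∀ t, 0 ≤ ∫ x in (x₀ - r)..(x₀ + r), (u t x)^2 := fun t =>
    intervalIntegral.integral_nonneg hab.le fun x _ => sq_nonneg _
  have hG0 : ∀ t, 0 ≤ ∫ x in (x₀ - r)..(x₀ + r), (deriv (deriv (u t)) x)^2 := fun t =>
    intervalIntegral.integral_nonneg hab.le fun x _ => sq_nonneg _
  -- pointwise-in-time spatial estimate
  have hspace : ∀ t, (∫ x in (x₀ - r)..(x₀ + r), |u t x|^3)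
      ≤ 22 * (∫ x in (x₀ - r)..(x₀ + r), (u t x)^2) ^ ((11:ℝ)/8)
          * (∫ x in (x₀ - r)..(x₀ + r), (deriv (deriv (u t)) x)^2) ^ ((1:ℝ)/8)
        + 22 * (2*r) ^ (-(1:ℝ)/2) * (∫ x in (x₀ - r)..(x₀ + r), (u t x)^2) ^ ((3:ℝ)/2) := by
    intro t
    have := space_lemma (hu t) hab
    rwa [show x₀ + r - (x₀ - r) = 2*r by ring] at this
  -- a.e. bound after inserting S t ≤ r A
  have hae2 : ∀ᵐ t ∂(volume.restrict (Set.Ioo (t₀ - r^4) (t₀ + r^4))),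
      (fun t => ∫ x in (x₀ - r)..(x₀ + r), |u t x|^3) t
        ≤ (fun t => 22 * (r*A) ^ ((11:ℝ)/8)
              * (∫ x in (x₀ - r)..(x₀ + r), (deriv (deriv (u t)) x)^2) ^ ((1:ℝ)/8)
            + 22 * (2*r) ^ (-(1:ℝ)/2) * (r*A) ^ ((3:ℝ)/2)) t := by
    filter_upwards [hae] with t ht
    rw [conv] at ht
    have hSA : (∫ x in (x₀ - r)..(x₀ + r), (u t x)^2) ≤ r * A := by
      rw [one_div, inv_mul_le_iff₀ hr] at ht
      exact ht
    have t1 : (∫ x in (x₀ - r)..(x₀ + r), (u t x)^2) ^ ((11:ℝ)/8) ≤ (r*A) ^ ((11:ℝ)/8) :=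
      Real.rpow_le_rpow (hS0 t) hSA (by norm_num)
    have t2 : (∫ x in (x₀ - r)..(x₀ + r), (u t x)^2) ^ ((3:ℝ)/2) ≤ (r*A) ^ ((3:ℝ)/2) :=
      Real.rpow_le_rpow (hS0 t) hSA (by norm_num)
    have hG8 : 0 ≤ (∫ x in (x₀ - r)..(x₀ + r), (deriv (deriv (u t)) x)^2) ^ ((1:ℝ)/8) :=
      Real.rpow_nonneg (hG0 t) _
    have b1 := mul_le_mul_of_nonneg_right (by linarith : (22:ℝ) * (∫ x in (x₀ - r)..(x₀ + r), (u t x)^2) ^ ((11:ℝ)/8) ≤ 22 * (r*A) ^ ((11:ℝ)/8)) hG8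
    have b2 := mul_le_mul_of_nonneg_left t2
      (show (0:ℝ) ≤ 22 * (2*r) ^ (-(1:ℝ)/2) by positivity)
    have := hspace t
    linarith
  -- integrate in time
  have hFint : IntegrableOn (fun t => ∫ x in (x₀ - r)..(x₀ + r), |u t x|^3)
      (Set.Ioo (t₀ - r^4) (t₀ + r^4)) volume :=
    (hFcont.integrableOn_Icc).mono_set Set.Ioo_subset_Icc_self
  have hRcont : Continuous (fun t => 22 * (r*A) ^ ((11:ℝ)/8)
      * (∫ x in (x₀ - r)..(x₀ + r), (deriv (deriv (u t)) x)^2) ^ ((1:ℝ)/8)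
      + 22 * (2*r) ^ (-(1:ℝ)/2) * (r*A) ^ ((3:ℝ)/2)) := by
    apply Continuous.add _ continuous_const
    exact continuous_const.mul (hGcont.rpow_const (fun t => Or.inr (by norm_num)))
  have hRint : IntegrableOn (fun t => 22 * (r*A) ^ ((11:ℝ)/8)
      * (∫ x in (x₀ - r)..(x₀ + r), (deriv (deriv (u t)) x)^2) ^ ((1:ℝ)/8)
      + 22 * (2*r) ^ (-(1:ℝ)/2) * (r*A) ^ ((3:ℝ)/2))
      (Set.Ioo (t₀ - r^4) (t₀ + r^4)) volume :=
    (hRcont.integrableOn_Icc).mono_set Set.Ioo_subset_Icc_self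
  have hmono := MeasureTheory.integral_mono_ae hFint hRint hae2
  -- compute the right-hand side integral
  have hG18int : IntegrableOn (fun t => 22 * (r*A) ^ ((11:ℝ)/8)
      * (∫ x in (x₀ - r)..(x₀ + r), (deriv (deriv (u t)) x)^2) ^ ((1:ℝ)/8))
      (Set.Ioo (t₀ - r^4) (t₀ + r^4)) volume :=
    ((continuous_const.mul (hGcont.rpow_const (fun t => Or.inr (by norm_num)))).integrableOn_Icc).mono_set
      Set.Ioo_subset_Icc_self
  have hvol : (volume (Set.Ioo (t₀ - r^4) (t₀ + r^4))).toReal = 2*r^4 := by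
    rw [Real.volume_Ioo, ENNReal.toReal_ofReal (by linarith)]
    ring
  have hsplit : (∫ t in Set.Ioo (t₀ - r^4) (t₀ + r^4), (22 * (r*A) ^ ((11:ℝ)/8)
      * (∫ x in (x₀ - r)..(x₀ + r), (deriv (deriv (u t)) x)^2) ^ ((1:ℝ)/8)
      + 22 * (2*r) ^ (-(1:ℝ)/2) * (r*A) ^ ((3:ℝ)/2)))
      = 22 * (r*A) ^ ((11:ℝ)/8) * (∫ t in Set.Ioo (t₀ - r^4) (t₀ + r^4),
          (∫ x in (x₀ - r)..(x₀ + r), (deriv (deriv (u t)) x)^2) ^ ((1:ℝ)/8))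
        + (2*r^4) * (22 * (2*r) ^ (-(1:ℝ)/2) * (r*A) ^ ((3:ℝ)/2)) := by
    rw [MeasureTheory.integral_add hG18int
      ((integrableOn_const measure_Ioo_lt_top.ne))]
    rw [MeasureTheory.integral_const_mul, MeasureTheory.setIntegral_const, smul_eq_mul, measureReal_def, hvol]
    try ring
  -- Hölder in time
  have hIGnn : (0:ℝ) ≤ ∫ t in Set.Ioo (t₀ - r^4) (t₀ + r^4),
      ∫ x in (x₀ - r)..(x₀ + r), (deriv (deriv (u t)) x)^2 :=
    MeasureTheory.setIntegral_nonneg measurableSet_Ioo fun t _ => hG0 t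
  have hhold : (∫ t in Set.Ioo (t₀ - r^4) (t₀ + r^4),
        (∫ x in (x₀ - r)..(x₀ + r), (deriv (deriv (u t)) x)^2) ^ ((1:ℝ)/8))
      ≤ (2*r^4) ^ ((7:ℝ)/8) * (∫ t in Set.Ioo (t₀ - r^4) (t₀ + r^4),
          ∫ x in (x₀ - r)..(x₀ + r), (deriv (deriv (u t)) x)^2) ^ ((1:ℝ)/8) := by
    have h8 : (1:ℝ) < 8 := by norm_num
    have hcG : Continuous (fun t =>
        (∫ x in (x₀ - r)..(x₀ + r), (deriv (deriv (u t)) x)^2) ^ ((1:ℝ)/8)) :=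
      hGcont.rpow_const (fun t => Or.inr (by norm_num))
    have h0G : ∀ t, 0 ≤ (∫ x in (x₀ - r)..(x₀ + r), (deriv (deriv (u t)) x)^2) ^ ((1:ℝ)/8) :=
      fun t => Real.rpow_nonneg (hG0 t) _
    have := holder_p hcG h0G h8 htab.le
    rw [MeasureTheory.integral_Ioc_eq_integral_Ioo, MeasureTheory.integral_Ioc_eq_integral_Ioo] at this
    have hcongr : (∫ t in Set.Ioo (t₀ - r^4) (t₀ + r^4),
        ((∫ x in (x₀ - r)..(x₀ + r), (deriv (deriv (u t)) x)^2) ^ ((1:ℝ)/8)) ^ (8:ℝ))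
        = ∫ t in Set.Ioo (t₀ - r^4) (t₀ + r^4),
            ∫ x in (x₀ - r)..(x₀ + r), (deriv (deriv (u t)) x)^2 := by
      apply MeasureTheory.integral_congr_ae
      apply Filter.Eventually.of_forall
      intro t
      show ((∫ x in (x₀ - r)..(x₀ + r), (deriv (deriv (u t)) x)^2) ^ ((1:ℝ)/8)) ^ (8:ℝ)
          = ∫ x in (x₀ - r)..(x₀ + r), (deriv (deriv (u t)) x)^2
      rw [← Real.rpow_mul (hG0 t)]
      norm_num
    rw [hcongr] at this
    have : (∫ t in Set.Ioo (t₀ - r^4) (t₀ + r^4),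
        (∫ x in (x₀ - r)..(x₀ + r), (deriv (deriv (u t)) x)^2) ^ ((1:ℝ)/8))
        ≤ (t₀ + r^4 - (t₀ - r^4)) ^ (1 - 1/(8:ℝ)) * (∫ t in Set.Ioo (t₀ - r^4) (t₀ + r^4),
            ∫ x in (x₀ - r)..(x₀ + r), (deriv (deriv (u t)) x)^2) ^ (1/(8:ℝ)) := this
    rwa [show t₀ + r^4 - (t₀ - r^4) = 2*r^4 by ring,
      show (1 - 1/(8:ℝ)) = (7:ℝ)/8 by norm_num,
      show (1/(8:ℝ)) = (1:ℝ)/8 by norm_num] at this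
  -- assemble
  have step2 : 22 * (r*A) ^ ((11:ℝ)/8) * (∫ t in Set.Ioo (t₀ - r^4) (t₀ + r^4),
        (∫ x in (x₀ - r)..(x₀ + r), (deriv (deriv (u t)) x)^2) ^ ((1:ℝ)/8))
      ≤ 22 * (r*A) ^ ((11:ℝ)/8) * ((2*r^4) ^ ((7:ℝ)/8)
          * (∫ t in Set.Ioo (t₀ - r^4) (t₀ + r^4),
              ∫ x in (x₀ - r)..(x₀ + r), (deriv (deriv (u t)) x)^2) ^ ((1:ℝ)/8)) :=
    mul_le_mul_of_nonneg_left hhold (by positivity)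
  have step3 := term1_alg (IG := ∫ t in Set.Ioo (t₀ - r^4) (t₀ + r^4),
      ∫ x in (x₀ - r)..(x₀ + r), (deriv (deriv (u t)) x)^2) hr hA hIGnn
  have step4 := term2_alg (A := A) hr hA
  rw [one_div, inv_mul_le_iff₀ (by positivity : (0:ℝ) < r^5)]
  rw [hsplit] at hmono
  linarith
end

section
/- Vitali-type absolute continuity implies vanishing parabolic Hausdorff measure: let S ⊂ ℝ² and g ∈ L¹(ℝ²), g ≥ 0, ε > 0, and suppose that for every open set V ⊇ S and every z ∈ S there exist arbitrarily small r > 0 with Q_{r/5}(z) ⊂ V and (5/r) ∫_{Q_{r/5}(z)} g > ε. If moreover S has Lebesgue measure zero, then P¹(S) = 0, where P¹ is the one-dimensional parabolic Hausdorff measure. -/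
open MeasureTheory

/-- The parabolic cylinder `Q(z,r) = (x-r,x+r) × (t-r⁴,t+r⁴)`. -/
def pQ (z : ℝ × ℝ) (r : ℝ) : Set (ℝ × ℝ) :=
  Set.Ioo (z.1 - r) (z.1 + r) ×ˢ Set.Ioo (z.2 - r ^ 4) (z.2 + r ^ 4)

/-- Pre-measure `P¹_δ` from covers by parabolic cylinders of radii `< δ`. -/
noncomputable def parabolicHausdorffPre (δ : ℝ) (X : Set (ℝ × ℝ)) : ENNReal :=
  ⨅ (z : ℕ → ℝ × ℝ) (ρ : ℕ → ℝ) (_ : ∀ n, ρ n ∈ Set.Ioo (0:ℝ) δ)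
    (_ : X ⊆ ⋃ n, pQ (z n) (ρ n)), ∑' n, ENNReal.ofReal (ρ n)

/-- The one-dimensional parabolic Hausdorff measure `P¹`. -/
noncomputable def parabolicHausdorff1 (X : Set (ℝ × ℝ)) : ENNReal :=
  ⨆ δ ∈ Set.Ioi (0:ℝ), parabolicHausdorffPre δ X

lemma pQ_isOpen (z : ℝ × ℝ) (r : ℝ) : IsOpen (pQ z r) :=
  isOpen_Ioo.prod isOpen_Ioo

lemma mem_pQ_self {z : ℝ × ℝ} {r : ℝ} (hr : 0 < r) : z ∈ pQ z r := by
  constructor <;> constructor <;> simp <;> positivity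

lemma pQ_geom {z b : ℝ × ℝ} {ρ σ : ℝ} (hρ : 0 < ρ) (hσ : 0 < σ) (hle : ρ ≤ 2 * σ)
    (hne : (pQ z ρ ∩ pQ b σ).Nonempty) : pQ z ρ ⊆ pQ b (5 * σ) := by
  obtain ⟨w, hw1, hw2⟩ := hne
  obtain ⟨⟨w11, w12⟩, ⟨w21, w22⟩⟩ := hw1
  obtain ⟨⟨w31, w32⟩, ⟨w41, w42⟩⟩ := hw2
  intro p hp
  obtain ⟨⟨p11, p12⟩, ⟨p21, p22⟩⟩ := hp
  have hρ4 : ρ ^ 4 ≤ 16 * σ ^ 4 := by nlinarith [pow_le_pow_left₀ hρ.le hle 4]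
  refine ⟨⟨?_, ?_⟩, ⟨?_, ?_⟩⟩ <;> nlinarith [hσ.le, pow_pos hσ 4]

/-- Vitali-type absolute continuity implies vanishing parabolic Hausdorff measure:
if `S` is Lebesgue-null, `g ∈ L¹` is nonnegative, and for every open `V ⊇ S` and every
`z ∈ S` there are arbitrarily small `r > 0` with `Q_{r/5}(z) ⊂ V` and
`(5/r) ∫_{Q_{r/5}(z)} g > ε`, then `P¹(S) = 0`. -/
theorem stmt18 (S : Set (ℝ × ℝ)) (g : ℝ × ℝ → ℝ) (ε : ℝ)
    (hg : Integrable g) (hg0 : ∀ w, 0 ≤ g w) (hε : 0 < ε)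
    (hSnull : volume S = 0)
    (h : ∀ V : Set (ℝ × ℝ), IsOpen V → S ⊆ V → ∀ z ∈ S, ∀ δ > 0,
      ∃ r ∈ Set.Ioo (0:ℝ) δ, pQ z (r/5) ⊆ V ∧ ε < (5 / r) * ∫ w in pQ z (r/5), g w) :
    parabolicHausdorff1 S = 0 := by
  classical
  have main : ∀ δ > (0:ℝ), ∀ η > (0:ℝ),
      parabolicHausdorffPre δ S ≤ ENNReal.ofReal η := by
    intro δ hδ η hη
    set μ : Measure (ℝ × ℝ) := volume.withDensity (fun w => ENNReal.ofReal (g w)) with hμdef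
    haveI : IsFiniteMeasure μ := by
      constructor
      have : μ Set.univ = ∫⁻ w, ENNReal.ofReal (g w) := by
        rw [hμdef, withDensity_apply _ MeasurableSet.univ, Measure.restrict_univ]
      rw [this]
      calc ∫⁻ w, ENNReal.ofReal (g w) = ∫⁻ w, (‖g w‖₊ : ENNReal) := by
            refine lintegral_congr fun w => ?_
            exact (Real.enorm_eq_ofReal (hg0 w)).symm
        _ < ⊤ := hg.2
    have hμS : μ S = 0 := (withDensity_absolutelyContinuous _ _) hSnull
    obtain ⟨V, hSV, hVo, hμV⟩ := Set.exists_isOpen_lt_of_lt (μ := μ) S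
      (ENNReal.ofReal (ε * η / 10)) (by rw [hμS]; exact ENNReal.ofReal_pos.2 (by positivity))
    choose! r hr1 hr2 hr3 using fun z hz => h V hVo hSV z hz δ hδ
    -- Vitali covering lemma
    obtain ⟨u, huS, hud, hcov⟩ := Vitali.exists_disjoint_subfamily_covering_enlargement
      (fun z => pQ z (r z / 5)) S (fun z => r z / 5) 2 one_lt_two
      (fun z hz => by linarith [(hr1 z hz).1])
      (δ / 5) (fun z hz => by linarith [(hr1 z hz).2.le])
      (fun z hz => ⟨z, mem_pQ_self (by linarith [(hr1 z hz).1])⟩)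
    have hupos : ∀ b ∈ u, 0 < r b := fun b hb => (hr1 b (huS hb)).1
    have hucnt : u.Countable := hud.countable_of_isOpen
      (fun z _ => pQ_isOpen _ _)
      (fun z hz => ⟨z, mem_pQ_self (by linarith [hupos z hz])⟩)
    haveI : Countable ↥u := hucnt.to_subtype
    haveI hEnc : Encodable ↥u := hucnt.toEncodable
    -- per-element measure bound
    have hone : ∀ b : ↥u, ENNReal.ofReal (r ↑b) ≤
        ENNReal.ofReal (5 / ε) * μ (pQ ↑b (r ↑b / 5)) := by
      intro b
      have hbS : (b : ℝ × ℝ) ∈ S := huS b.2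
      have hrpos : 0 < r ↑b := (hr1 _ hbS).1
      have hI := hr3 _ hbS
      set I := ∫ w in pQ (↑b : ℝ × ℝ) (r ↑b / 5), g w with hIdef
      have hIb : r ↑b ≤ 5 / ε * I := by
        rw [div_mul_eq_mul_div, lt_div_iff₀ hrpos] at hI
        rw [div_mul_eq_mul_div, le_div_iff₀ hε]
        nlinarith
      have hμQ : ENNReal.ofReal I = μ (pQ ↑b (r ↑b / 5)) := by
        rw [hIdef, ofReal_integral_eq_lintegral_ofReal hg.restrict
          (Filter.Eventually.of_forall hg0), hμdef,
          withDensity_apply _ (pQ_isOpen _ _).measurableSet]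
      calc ENNReal.ofReal (r ↑b) ≤ ENNReal.ofReal (5 / ε * I) := ENNReal.ofReal_le_ofReal hIb
        _ = ENNReal.ofReal (5 / ε) * ENNReal.ofReal I := ENNReal.ofReal_mul (by positivity)
        _ = ENNReal.ofReal (5 / ε) * μ (pQ ↑b (r ↑b / 5)) := by rw [hμQ]
    -- sum over the disjoint family
    have hdisj : Pairwise (Function.onFun Disjoint fun b : ↥u => pQ ↑b (r ↑b / 5)) := hud.subtype
    have hsum_u : ∑' b : ↥u, ENNReal.ofReal (r ↑b) ≤ ENNReal.ofReal (η / 2) := by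
      calc ∑' b : ↥u, ENNReal.ofReal (r ↑b)
          ≤ ∑' b : ↥u, ENNReal.ofReal (5 / ε) * μ (pQ ↑b (r ↑b / 5)) :=
            ENNReal.tsum_le_tsum hone
        _ = ENNReal.ofReal (5 / ε) * ∑' b : ↥u, μ (pQ ↑b (r ↑b / 5)) :=
            ENNReal.tsum_mul_left
        _ = ENNReal.ofReal (5 / ε) * μ (⋃ b : ↥u, pQ ↑b (r ↑b / 5)) := by
            rw [measure_iUnion hdisj (fun b => (pQ_isOpen _ _).measurableSet)]
        _ ≤ ENNReal.ofReal (5 / ε) * μ V := by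
            gcongr
            exact Set.iUnion_subset fun b => hr2 _ (huS b.2)
        _ ≤ ENNReal.ofReal (5 / ε) * ENNReal.ofReal (ε * η / 10) := by gcongr
        _ = ENNReal.ofReal (5 / ε * (ε * η / 10)) := (ENNReal.ofReal_mul (by positivity)).symm
        _ = ENNReal.ofReal (η / 2) := by congr 1; field_simp; ring
    -- the cover sequence
    set c : ℝ := min δ η / 4 with hcdef
    have hc0 : 0 < c := by have := lt_min hδ hη; positivity
    have hcδ : c < δ := by
      have h1 : min δ η ≤ δ := min_le_left _ _
      rw [hcdef]; linarith
    set dec : ℕ → Option ↥u := Encodable.decode₂ ↥u with hdecdef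
    set z' : ℕ → ℝ × ℝ := fun n => (dec n).elim (0, 0) (fun b => (b : ℝ × ℝ)) with hz'def
    set ρ' : ℕ → ℝ := fun n => (dec n).elim (c * (1 / 2) ^ n) (fun b => r ↑b) with hρ'def
    have hρ'mem : ∀ n, ρ' n ∈ Set.Ioo (0:ℝ) δ := by
      intro n
      rcases hdn : dec n with _ | b
      · simp only [hρ'def, hdn, Option.elim]
        constructor
        · positivity
        · calc c * (1 / 2) ^ n ≤ c * 1 := by
                have : ((1:ℝ) / 2) ^ n ≤ 1 :=
                  pow_le_one₀ (by norm_num) (by norm_num)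
                nlinarith
            _ < δ := by linarith
      · simp only [hρ'def, hdn, Option.elim]
        exact hr1 _ (huS b.2)
    have hcover : S ⊆ ⋃ n, pQ (z' n) (ρ' n) := by
      intro z hz
      obtain ⟨b, hbu, hne, hble⟩ := hcov z hz
      have hbS := huS hbu
      have hzb : z ∈ pQ b (r b) := by
        have hsub := pQ_geom (z := z) (b := b) (ρ := r z / 5) (σ := r b / 5)
          (by linarith [(hr1 z hz).1]) (by linarith [(hr1 b hbS).1])
          (by linarith [hble]) hne
        have : (5:ℝ) * (r b / 5) = r b := by ring
        rw [this] at hsub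
        exact hsub (mem_pQ_self (by linarith [(hr1 z hz).1]))
      refine Set.mem_iUnion.2 ⟨Encodable.encode (⟨b, hbu⟩ : ↥u), ?_⟩
      have hdn : dec (Encodable.encode (⟨b, hbu⟩ : ↥u)) = some ⟨b, hbu⟩ :=
        Encodable.decode₂_encode _
      rw [hz'def, hρ'def]
      simp only [hdn, Option.elim]
      exact hzb
    -- bound the total sum
    have hF : (∑' n, (dec n).elim 0 (fun b => ENNReal.ofReal (r ↑b)))
        = ∑' b : ↥u, ENNReal.ofReal (r ↑b) := by
      refine (Function.Injective.tsum_eq (g := (Encodable.encode : ↥u → ℕ))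
        Encodable.encode_injective ?_).symm.trans ?_
      · intro n hn
        rcases hdn : dec n with _ | b
        · rw [Function.mem_support, hdn] at hn; simp at hn
        · exact ⟨b, (Encodable.mem_decode₂.1 hdn)⟩
      · refine tsum_congr fun b => ?_
        rw [show dec (Encodable.encode b) = some b from Encodable.decode₂_encode _]
        rfl
    have hT : (∑' n : ℕ, ENNReal.ofReal (c * (1 / 2) ^ n)) ≤ ENNReal.ofReal (η / 2) := by
      have h12 : ENNReal.ofReal ((1:ℝ) / 2) = 2⁻¹ := by
        rw [ENNReal.ofReal_div_of_pos (by norm_num)]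
        norm_num
      calc (∑' n : ℕ, ENNReal.ofReal (c * (1 / 2) ^ n))
          = ∑' n : ℕ, ENNReal.ofReal c * (2⁻¹ : ENNReal) ^ n := by
            refine tsum_congr fun n => ?_
            rw [ENNReal.ofReal_mul hc0.le, ENNReal.ofReal_pow (by norm_num), h12]
        _ = ENNReal.ofReal c * (1 - 2⁻¹)⁻¹ := by
            rw [ENNReal.tsum_mul_left, ENNReal.tsum_geometric]
        _ = ENNReal.ofReal c * 2 := by rw [ENNReal.one_sub_inv_two]; norm_num
        _ ≤ ENNReal.ofReal (η / 4) * 2 := by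
            have hcle : c ≤ η / 4 := by
              have h1 : min δ η ≤ η := min_le_right _ _
              rw [hcdef]; linarith
            exact mul_le_mul_left (ENNReal.ofReal_le_ofReal hcle) 2
        _ = ENNReal.ofReal (η / 2) := by
            rw [show (2 : ENNReal) = ENNReal.ofReal 2 by norm_num,
              ← ENNReal.ofReal_mul (by positivity)]
            congr 1; ring
    have htot : (∑' n, ENNReal.ofReal (ρ' n)) ≤ ENNReal.ofReal η := by
      calc (∑' n, ENNReal.ofReal (ρ' n))
          ≤ ∑' n, ((dec n).elim 0 (fun b => ENNReal.ofReal (r ↑b))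
              + ENNReal.ofReal (c * (1 / 2) ^ n)) := by
            refine ENNReal.tsum_le_tsum fun n => ?_
            rw [hρ'def]
            rcases hdn : dec n with _ | b <;> simp [hdn]
        _ = (∑' n, (dec n).elim 0 (fun b => ENNReal.ofReal (r ↑b)))
              + ∑' n : ℕ, ENNReal.ofReal (c * (1 / 2) ^ n) := ENNReal.tsum_add
        _ ≤ ENNReal.ofReal (η / 2) + ENNReal.ofReal (η / 2) := by
            rw [hF]; exact add_le_add hsum_u hT
        _ = ENNReal.ofReal η := by
            rw [← ENNReal.ofReal_add (by positivity) (by positivity)]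
            norm_num
    calc parabolicHausdorffPre δ S ≤ ∑' n, ENNReal.ofReal (ρ' n) :=
          iInf_le_of_le z' (iInf_le_of_le ρ' (iInf_le_of_le hρ'mem (iInf_le _ hcover)))
      _ ≤ ENNReal.ofReal η := htot
  have h0 : ∀ δ ∈ Set.Ioi (0:ℝ), parabolicHausdorffPre δ S = 0 := by
    intro δ hδ
    refine le_antisymm ?_ zero_le
    refine ENNReal.le_of_forall_pos_le_add (fun η hη _ => ?_)
    rw [zero_add]
    rcases eq_or_lt_of_le (zero_le : (0:ENNReal) ≤ η) with h' | h'
    · exact absurd h'.symm (by exact_mod_cast hη.ne')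
    · calc parabolicHausdorffPre δ S ≤ ENNReal.ofReal (η : ℝ) :=
            main δ hδ (η : ℝ) (by exact_mod_cast hη)
        _ = (η : ENNReal) := ENNReal.ofReal_coe_nnreal
  rw [parabolicHausdorff1]
  exact le_antisymm (iSup₂_le fun δ hδ => (h0 δ hδ).le) zero_le
end
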